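/- Let κ > 0, ν ∈ (0, 1), μ ∈ ℝ, and set b₁ = cos μ, b₂ = sin μ, b₃ = ν/κ, and d₄ = b₂(1−ν), d₃ = 2b₃ + 2b₁(1−ν), d₂ = 2b₂ν, d₁ = 2b₃ + 2b₁(1+ν), d₀ = −b₂(1+ν). Then for every θ ∈ (−π, π), writing x = tan(θ/2), the derivative of θ ↦ e^{κ cos(θ − μ)} (1 + ν cos θ) vanishes at θ if and only if d₄ x⁴ + d₃ x³ + d₂ x² + d₁ x + d₀ = 0. -/

import Mathlib

open Real

theorem stmt16 (κ ν μ : ℝ) (hκ : 0 < κ) (hν : ν ∈ Set.Ioo (0:ℝ) 1)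
    (b₁ b₂ b₃ d₀ d₁ d₂ d₃ d₄ : ℝ)
    (hb₁ : b₁ = Real.cos μ) (hb₂ : b₂ = Real.sin μ) (hb₃ : b₃ = ν / κ)
    (hd₄ : d₄ = b₂ * (1 - ν)) (hd₃ : d₃ = 2 * b₃ + 2 * b₁ * (1 - ν))
    (hd₂ : d₂ = 2 * b₂ * ν) (hd₁ : d₁ = 2 * b₃ + 2 * b₁ * (1 + ν))
    (hd₀ : d₀ = -(b₂ * (1 + ν)))
    (θ : ℝ) (hθ : θ ∈ Set.Ioo (-π) π) :
    deriv (fun t : ℝ => Real.exp (κ * Real.cos (t - μ)) * (1 + ν * Real.cos t)) θ = 0 ↔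
      d₄ * Real.tan (θ / 2) ^ 4 + d₃ * Real.tan (θ / 2) ^ 3
        + d₂ * Real.tan (θ / 2) ^ 2 + d₁ * Real.tan (θ / 2) + d₀ = 0 := by
  obtain ⟨hθ1, hθ2⟩ := hθ
  have hκ' : κ ≠ 0 := ne_of_gt hκ
  -- derivative computation
  have h1 : HasDerivAt (fun t : ℝ => κ * Real.cos (t - μ))
      (κ * (-Real.sin (θ - μ))) θ := by
    have := (((hasDerivAt_id θ).sub_const μ).cos)
    simpa using this.const_mul κ
  have h2 : HasDerivAt (fun t : ℝ => (1:ℝ) + ν * Real.cos t) (ν * (-Real.sin θ)) θ := by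
    have := (Real.hasDerivAt_cos θ).const_mul ν
    simpa using this.const_add 1
  have hD : HasDerivAt (fun t : ℝ => Real.exp (κ * Real.cos (t - μ)) * (1 + ν * Real.cos t))
      (Real.exp (κ * Real.cos (θ - μ)) * (κ * (-Real.sin (θ - μ))) * (1 + ν * Real.cos θ)
        + Real.exp (κ * Real.cos (θ - μ)) * (ν * (-Real.sin θ))) θ := h1.exp.mul h2
  rw [hD.deriv]
  set F : ℝ := Real.sin (θ - μ) * (1 + ν * Real.cos θ) + (ν / κ) * Real.sin θ with hF
  have hDv : Real.exp (κ * Real.cos (θ - μ)) * (κ * (-Real.sin (θ - μ))) * (1 + ν * Real.cos θ)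
        + Real.exp (κ * Real.cos (θ - μ)) * (ν * (-Real.sin θ))
      = -(Real.exp (κ * Real.cos (θ - μ)) * κ) * F := by
    rw [hF]; field_simp; ring
  have hexp : Real.exp (κ * Real.cos (θ - μ)) ≠ 0 := (Real.exp_pos _).ne'
  -- half-angle setup
  have hc : Real.cos (θ / 2) ≠ 0 :=
    (Real.cos_pos_of_mem_Ioo ⟨by linarith, by linarith⟩).ne'
  set s := Real.sin (θ / 2) with hs
  set c := Real.cos (θ / 2) with hcdef
  have hx : Real.tan (θ / 2) = s / c := Real.tan_eq_sin_div_cos _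
  have hsin : Real.sin θ = 2 * s * c := by
    rw [show θ = 2 * (θ / 2) by ring, Real.sin_two_mul]
  have hcos : Real.cos θ = 2 * c ^ 2 - 1 := by
    rw [show θ = 2 * (θ / 2) by ring, Real.cos_two_mul]
  have hs2 : s ^ 2 = 1 - c ^ 2 := by
    have := Real.sin_sq_add_cos_sq (θ / 2); linarith
  have key : d₄ * Real.tan (θ / 2) ^ 4 + d₃ * Real.tan (θ / 2) ^ 3
        + d₂ * Real.tan (θ / 2) ^ 2 + d₁ * Real.tan (θ / 2) + d₀ = F / c ^ 4 := by
    rw [hF, Real.sin_sub, hx, hsin, hcos, hd₄, hd₃, hd₂, hd₁, hd₀, hb₁, hb₂, hb₃]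
    field_simp
    linear_combination (2*ν*κ^2*s*c^11 + 2*Real.cos μ*κ^3*s*c^11 - 2*Real.cos μ*ν*κ^3*s*c^11
      + Real.sin μ*κ^3*c^10 - Real.sin μ*κ^3*c^12 + Real.sin μ*κ^3*s^2*c^10
      - Real.sin μ*ν*κ^3*c^10 + 3*Real.sin μ*ν*κ^3*c^12 - Real.sin μ*ν*κ^3*s^2*c^10
      + 3*ν*κ*c^2*Real.sin μ - 3*ν*κ^3*c^12*Real.sin μ - 2*s*ν*κ*c*Real.cos μ - 2*s*ν*κ^2*c^11 + 2*s*ν*κ^3*c^11*Real.cos μ + 2*s*ν*c + 2*s*κ*c*Real.cos μ - 2*s*κ^3*c^11*Real.cos μ - 1*s^2*ν*κ*Real.sin μ + 1*s^2*ν*κ^3*c^10*Real.sin μ + 1*s^2*κ*Real.sin μ - 1*s^2*κ^3*c^10*Real.sin μ - 1*ν*κ*Real.sin μ + 1*ν*κ^3*c^10*Real.sin μ + 1*κ*Real.sin μ - 1*κ*c^2*Real.sin μ - 1*κ^3*c^10*Real.sin μ + 1*κ^3*c^12*Real.sin μ) * hs2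
  rw [hDv, key]
  constructor
  · intro h
    have hF0 : F = 0 := by
      rcases mul_eq_zero.mp h with h' | h'
      · exfalso
        have hpos : (0:ℝ) < Real.exp (κ * Real.cos (θ - μ)) * κ := by positivity
        linarith
      · exact h'
    simp [hF0]
  · intro h
    have hF0 : F = 0 := by
      have : F / c ^ 4 = 0 := h
      rcases div_eq_zero_iff.mp this with h' | h'
      · exact h'
      · exact absurd h' (pow_ne_zero _ hc)
    simp [hF0]
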